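/- (Pólya's Theorem with Zeros, Castle–Powers–Reznick.) Let f = Σ_{a∈𝒜} c_a x^a be a nonzero homogeneous polynomial in x₁,…,x_n with support 𝒜 ⊂ ℕⁿ, which is copositive (f(u) ≥ 0 for all u ∈ ℝⁿ_{≥0}) and whose zero set inside the standard simplex Δ = { x ∈ ℝⁿ_{≥0} : x₁+⋯+x_n = 1 } is a (possibly empty) union of faces Δ_I = { x ∈ Δ : x_i = 0 for all i ∈ I }. Set 𝒜⁺ = { a ∈ 𝒜 : c_a > 0 } and 𝒜⁻ = { a ∈ 𝒜 : c_a < 0 }. Then there exists N ∈ ℕ such that (x₁+⋯+x_n)^N·f has no negative coefficients (equivalently, every nonzero coefficient is positive) if and only if for every I ⊆ {1,…,n} with Δ_I nonempty and Δ_I contained in the zero set of f, the following two conditions hold: (1) for each b ∈ 𝒜⁻ there exists a ∈ 𝒜⁺ with a_i ≤ b_i for all i ∈ I; (2) for each a ∈ 𝒜⁺ that is minimal for I in 𝒜⁺, the polynomial Σ_{b∈Γ_{I,a}} c_b x^b is strictly positive at every x ∈ ℝⁿ_{>0}, where Γ_{I,a} = { b ∈ 𝒜 : b_i = a_i for all i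 ∈ I }. -/

import Mathlib

open MvPolynomial Finset

namespace PolyaAux

variable {n : ℕ}

/-- nonneg coefficients predicate -/
def NN (p : MvPolynomial (Fin n) ℝ) : Prop := ∀ μ, 0 ≤ p.coeff μ

lemma NN.mul {p q : MvPolynomial (Fin n) ℝ} (hp : NN p) (hq : NN q) : NN (p * q) := by
  intro μ
  classical
  rw [MvPolynomial.coeff_mul]
  exact Finset.sum_nonneg fun x _ => mul_nonneg (hp _) (hq _)

lemma NN.pow {p : MvPolynomial (Fin n) ℝ} (hp : NN p) (N : ℕ) : NN (p ^ N) := by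
  induction N with
  | zero => intro μ; simp [MvPolynomial.coeff_one]; positivity
  | succ k ih => rw [pow_succ]; exact ih.mul hp

lemma NN.sumX : NN (∑ i : Fin n, (X i : MvPolynomial (Fin n) ℝ)) := by
  intro μ
  classical
  rw [MvPolynomial.coeff_sum]
  refine Finset.sum_nonneg fun i _ => ?_
  rw [MvPolynomial.coeff_X']
  split <;> norm_num

lemma NN.eval_nonneg {p : MvPolynomial (Fin n) ℝ} (hp : NN p) {x : Fin n → ℝ}
    (hx : ∀ i, 0 ≤ x i) : 0 ≤ eval x p := by
  rw [MvPolynomial.eval_eq]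
  refine Finset.sum_nonneg fun μ _ => mul_nonneg (hp _) ?_
  exact Finset.prod_nonneg fun i _ => pow_nonneg (hx i) _

lemma NN.eval_pos {p : MvPolynomial (Fin n) ℝ} (hp : NN p) (h0 : p ≠ 0) {x : Fin n → ℝ}
    (hx : ∀ i, 0 < x i) : 0 < eval x p := by
  rw [MvPolynomial.eval_eq]
  refine Finset.sum_pos (fun μ hμ => ?_) (MvPolynomial.support_nonempty.2 h0)
  have h1 : 0 < p.coeff μ := lt_of_le_of_ne (hp μ) (Ne.symm (MvPolynomial.mem_support_iff.1 hμ))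
  exact mul_pos h1 (Finset.prod_pos fun i _ => pow_pos (hx i) _)

/-- coefficient of `X j ^ N` in `(∑ X i)^N` is at least 1 -/
lemma coeff_single_pow (N : ℕ) (j : Fin n) :
    1 ≤ ((∑ i : Fin n, (X i : MvPolynomial (Fin n) ℝ)) ^ N).coeff (Finsupp.single j N) := by
  classical
  have hsplit : (∑ i : Fin n, (X i : MvPolynomial (Fin n) ℝ)) =
      X j + ∑ i ∈ Finset.univ.erase j, X i := by
    rw [add_comm, Finset.sum_erase_add _ _ (Finset.mem_univ j)]
  rw [hsplit, add_pow]
  rw [MvPolynomial.coeff_sum]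
  have hmem : N ∈ Finset.range (N + 1) := by simp
  rw [← Finset.sum_erase_add _ _ hmem]
  have hlast : ((X j : MvPolynomial (Fin n) ℝ) ^ N * (∑ i ∈ Finset.univ.erase j, X i) ^ (N - N) *
      (N.choose N : MvPolynomial (Fin n) ℝ)).coeff (Finsupp.single j N) = 1 := by
    simp [MvPolynomial.coeff_X_pow]
  rw [hlast]
  have hrest : ∀ k ∈ (Finset.range (N + 1)).erase N,
      0 ≤ ((X j : MvPolynomial (Fin n) ℝ) ^ k * (∑ i ∈ Finset.univ.erase j, X i) ^ (N - k) *
        (N.choose k : MvPolynomial (Fin n) ℝ)).coeff (Finsupp.single j N) := by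
    intro k _
    have h1 : NN ((X j : MvPolynomial (Fin n) ℝ)) := by
      intro μ; rw [MvPolynomial.coeff_X']; split <;> norm_num
    have h2 : NN (∑ i ∈ Finset.univ.erase j, (X i : MvPolynomial (Fin n) ℝ)) := by
      intro μ
      rw [MvPolynomial.coeff_sum]
      refine Finset.sum_nonneg fun i _ => ?_
      rw [MvPolynomial.coeff_X']; split <;> norm_num
    have h3 : NN ((N.choose k : MvPolynomial (Fin n) ℝ)) := by
      intro μ
      rw [← map_natCast (MvPolynomial.C : ℝ →+* MvPolynomial (Fin n) ℝ), MvPolynomial.coeff_C]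
      split <;> positivity
    exact ((h1.pow k).mul (h2.pow (N - k))).mul h3 _
  linarith [Finset.sum_nonneg hrest]

end PolyaAux

namespace PolyaAux

lemma forward1 {n N : ℕ} {f : MvPolynomial (Fin n) ℝ}
    (hN : ∀ μ : Fin n →₀ ℕ, 0 ≤ ((∑ i, X i) ^ N * f).coeff μ)
    {I : Finset (Fin n)} {j : Fin n} (hj : j ∉ I) :
    ∀ b ∈ f.support, f.coeff b < 0 →
      ∃ a ∈ f.support, 0 < f.coeff a ∧ ∀ i ∈ I, a i ≤ b i := by
  classical
  intro b hb hbneg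
  by_contra hcon
  push_neg at hcon
  set μ : Fin n →₀ ℕ := Finsupp.single j N + b with hμdef
  have hμI : ∀ i ∈ I, μ i = b i := by
    intro i hi
    have hji : j ≠ i := fun h => hj (h ▸ hi)
    simp [hμdef, Finsupp.add_apply, Finsupp.single_apply, hji]
  have hc := hN μ
  rw [MvPolynomial.coeff_mul] at hc
  have hterm : ∀ p ∈ Finset.HasAntidiagonal.antidiagonal μ,
      ((∑ i, X i : MvPolynomial (Fin n) ℝ) ^ N).coeff p.1 * f.coeff p.2 ≤ 0 := by
    intro p hp
    have hadd : p.1 + p.2 = μ := Finset.HasAntidiagonal.mem_antidiagonal.1 hp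
    have h1 : 0 ≤ ((∑ i, X i : MvPolynomial (Fin n) ℝ) ^ N).coeff p.1 := (NN.sumX.pow N) _
    rcases eq_or_ne (f.coeff p.2) 0 with h | h
    · simp [h]
    · have hsupp : p.2 ∈ f.support := MvPolynomial.mem_support_iff.2 h
      have hle : ∀ i ∈ I, p.2 i ≤ b i := by
        intro i hi
        have h2 : p.1 i + p.2 i = μ i := by
          rw [← hadd]; rfl
        have := hμI i hi
        omega
      have hnonpos : f.coeff p.2 ≤ 0 := by
        by_contra hpos
        push_neg at hpos
        obtain ⟨i, hiI, hlt⟩ := hcon p.2 hsupp hpos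
        exact absurd (hle i hiI) (by omega)
      exact mul_nonpos_of_nonneg_of_nonpos h1 hnonpos
  have hp0 : ((Finsupp.single j N, b) : (Fin n →₀ ℕ) × (Fin n →₀ ℕ)) ∈ Finset.HasAntidiagonal.antidiagonal μ :=
    Finset.HasAntidiagonal.mem_antidiagonal.2 rfl
  have hstrict : ((∑ i, X i : MvPolynomial (Fin n) ℝ) ^ N).coeff (Finsupp.single j N)
      * f.coeff b < 0 := by
    have h1 := coeff_single_pow N j
    nlinarith
  have hrest : ∑ p ∈ (Finset.HasAntidiagonal.antidiagonal μ).erase (Finsupp.single j N, b),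
      ((∑ i, X i : MvPolynomial (Fin n) ℝ) ^ N).coeff p.1 * f.coeff p.2 ≤ 0 :=
    Finset.sum_nonpos fun p hp => hterm p (Finset.mem_of_mem_erase hp)
  rw [← Finset.add_sum_erase _ _ hp0] at hc
  linarith

end PolyaAux

namespace PolyaAux

lemma forward2 {n N : ℕ} {f : MvPolynomial (Fin n) ℝ}
    (hN : ∀ μ : Fin n →₀ ℕ, 0 ≤ ((∑ i, X i) ^ N * f).coeff μ)
    {I : Finset (Fin n)} {j : Fin n} (hj : j ∉ I)
    (hcond1 : ∀ b ∈ f.support, f.coeff b < 0 →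
      ∃ a' ∈ f.support, 0 < f.coeff a' ∧ ∀ i ∈ I, a' i ≤ b i)
    {a : Fin n →₀ ℕ} (hasupp : a ∈ f.support) (hapos : 0 < f.coeff a)
    (hmin : ¬ ∃ a' ∈ f.support, 0 < f.coeff a' ∧ (∀ i ∈ I, a' i ≤ a i) ∧
        ∃ i ∈ I, a' i < a i)
    (x : Fin n → ℝ) (hx : ∀ i, 0 < x i) :
    0 < ∑ b ∈ f.support.filter (fun b => ∀ i ∈ I, b i = a i),
        f.coeff b * ∏ i, x i ^ b i := by
  classical
  have claimA : ∀ b ∈ f.support, (∀ i ∈ I, b i ≤ a i) → ∀ i ∈ I, b i = a i := by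
    intro b hb hle
    by_contra hne'
    push_neg at hne'
    obtain ⟨i0, hi0, hne0⟩ := hne'
    have hstrict : b i0 < a i0 := lt_of_le_of_ne (hle i0 hi0) hne0
    rcases lt_trichotomy (f.coeff b) 0 with hneg | h0 | hpos'
    · obtain ⟨a', ha'supp, ha'pos, ha'le⟩ := hcond1 b hb hneg
      exact hmin ⟨a', ha'supp, ha'pos, fun i hi => (ha'le i hi).trans (hle i hi),
        i0, hi0, lt_of_le_of_lt (ha'le i0 hi0) hstrict⟩
    · exact (MvPolynomial.mem_support_iff.1 hb) h0
    · exact hmin ⟨b, hb, hpos', hle, i0, hi0, hstrict⟩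
  set pw : MvPolynomial (Fin n) ℝ := (∑ i, X i) ^ N with hpw
  set g : MvPolynomial (Fin n) ℝ := pw * f with hg
  have hgNN : ∀ μ, 0 ≤ g.coeff μ := hN
  set Sν : Finset (Fin n →₀ ℕ) := pw.support.filter (fun ν => ∀ i ∈ I, ν i = 0) with hSν
  set Sb : Finset (Fin n →₀ ℕ) := f.support.filter (fun b => ∀ i ∈ I, b i = a i) with hSb
  set W : Finset ((Fin n →₀ ℕ) × (Fin n →₀ ℕ)) :=
    (pw.support ×ˢ f.support).filter (fun p => ∀ i ∈ I, (p.1 + p.2) i = a i) with hW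
  set B : Finset (Fin n →₀ ℕ) := g.support.filter (fun μ => ∀ i ∈ I, μ i = a i) with hB
  set B' : Finset (Fin n →₀ ℕ) := W.image (fun p => p.1 + p.2) with hB'
  -- step 5 : the power-sum part
  have step5 : ∀ y : Fin n → ℝ,
      ∑ ν ∈ Sν, pw.coeff ν * ∏ i, y i ^ ν i = (∑ j ∈ Iᶜ, y j) ^ N := by
    intro y
    set z : Fin n → ℝ := fun i => if i ∈ I then 0 else y i with hz
    have h1 : eval z pw = (∑ j ∈ Iᶜ, y j) ^ N := by
      rw [hpw, map_pow]
      congr 1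
      rw [map_sum]
      simp only [eval_X]
      rw [← Finset.sum_compl_add_sum I (fun i => z i)]
      have hzero : ∑ i ∈ I, z i = 0 := Finset.sum_eq_zero fun i hi => by simp [hz, hi]
      have h2 : ∑ i ∈ Iᶜ, z i = ∑ i ∈ Iᶜ, y i :=
        Finset.sum_congr rfl fun i hi => by simp [hz, Finset.mem_compl.1 hi]
      rw [hzero, h2, add_zero]
    rw [← h1, MvPolynomial.eval_eq']
    rw [← Finset.sum_filter_add_sum_filter_not pw.support (fun ν => ∀ i ∈ I, ν i = 0)]
    have hzero2 : ∑ ν ∈ pw.support.filter (fun ν => ¬ ∀ i ∈ I, ν i = 0),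
        pw.coeff ν * ∏ i, z i ^ ν i = 0 := by
      refine Finset.sum_eq_zero fun ν hν => ?_
      rw [Finset.mem_filter] at hν
      have hν2 := hν.2
      push_neg at hν2
      obtain ⟨i0, hi0, hne⟩ := hν2
      have hzz : z i0 ^ ν i0 = 0 := by
        rw [hz]; simp only [hi0, if_pos]; exact zero_pow hne
      rw [Finset.prod_eq_zero (Finset.mem_univ i0) hzz, mul_zero]
    have hsame : ∑ ν ∈ Sν, pw.coeff ν * ∏ i, z i ^ ν i
        = ∑ ν ∈ Sν, pw.coeff ν * ∏ i, y i ^ ν i := by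
      refine Finset.sum_congr rfl fun ν hν => ?_
      rw [hSν, Finset.mem_filter] at hν
      congr 1
      refine Finset.prod_congr rfl fun i _ => ?_
      by_cases hi : i ∈ I
      · rw [hν.2 i hi, pow_zero, pow_zero]
      · rw [hz]; simp [hi]
    rw [hzero2, add_zero, hsame]
  -- the key evaluation identity
  have key : ∀ y : Fin n → ℝ,
      ∑ μ ∈ B, g.coeff μ * ∏ i, y i ^ μ i =
        (∑ b ∈ Sb, f.coeff b * ∏ i, y i ^ b i) * (∑ j ∈ Iᶜ, y j) ^ N := by
    intro y
    have hsub : B ⊆ B' := by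
      intro μ hμ
      rw [hB, Finset.mem_filter] at hμ
      obtain ⟨hμs, hμP⟩ := hμ
      have hcoeff := MvPolynomial.mem_support_iff.1 hμs
      rw [hg, MvPolynomial.coeff_mul] at hcoeff
      obtain ⟨p, hp, hpne⟩ := Finset.exists_ne_zero_of_sum_ne_zero hcoeff
      refine Finset.mem_image.2 ⟨p, Finset.mem_filter.2 ⟨Finset.mem_product.2
        ⟨?_, ?_⟩, ?_⟩, Finset.HasAntidiagonal.mem_antidiagonal.1 hp⟩
      · exact MvPolynomial.mem_support_iff.2 (left_ne_zero_of_mul hpne)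
      · exact MvPolynomial.mem_support_iff.2 (right_ne_zero_of_mul hpne)
      · rw [Finset.HasAntidiagonal.mem_antidiagonal.1 hp]; exact hμP
    have h1 : ∑ μ ∈ B, g.coeff μ * ∏ i, y i ^ μ i
        = ∑ μ ∈ B', g.coeff μ * ∏ i, y i ^ μ i := by
      refine Finset.sum_subset hsub fun μ hμ hnB => ?_
      have hP : ∀ i ∈ I, μ i = a i := by
        obtain ⟨p, hp, rfl⟩ := Finset.mem_image.1 hμ
        exact (Finset.mem_filter.1 hp).2
      have hns : μ ∉ g.support := fun hs => hnB (Finset.mem_filter.2 ⟨hs, hP⟩)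
      rw [MvPolynomial.notMem_support_iff.1 hns, zero_mul]
    have h2 : ∑ μ ∈ B', g.coeff μ * ∏ i, y i ^ μ i
        = ∑ p ∈ W, pw.coeff p.1 * f.coeff p.2 * ∏ i, y i ^ (p.1 + p.2) i := by
      refine Finset.sum_image' _ fun p hp => ?_
      have hPμ : ∀ i ∈ I, (p.1 + p.2) i = a i := (Finset.mem_filter.1 hp).2
      have hco : ∑ p' ∈ W.filter (fun c' => c'.1 + c'.2 = p.1 + p.2),
          pw.coeff p'.1 * f.coeff p'.2 * ∏ i, y i ^ (p'.1 + p'.2) i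
          = ∑ p' ∈ W.filter (fun c' => c'.1 + c'.2 = p.1 + p.2),
          pw.coeff p'.1 * f.coeff p'.2 * ∏ i, y i ^ (p.1 + p.2) i := by
        refine Finset.sum_congr rfl fun p' hp' => ?_
        rw [(Finset.mem_filter.1 hp').2]
      rw [hco, ← Finset.sum_mul]
      congr 1
      rw [hg, MvPolynomial.coeff_mul]
      refine (Finset.sum_subset (fun p' hp' => Finset.HasAntidiagonal.mem_antidiagonal.2
        (Finset.mem_filter.1 hp').2) fun p' hp' hnp' => ?_).symm
      by_contra hne
      refine hnp' (Finset.mem_filter.2 ⟨Finset.mem_filter.2 ⟨Finset.mem_product.2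
        ⟨MvPolynomial.mem_support_iff.2 (left_ne_zero_of_mul hne),
         MvPolynomial.mem_support_iff.2 (right_ne_zero_of_mul hne)⟩, ?_⟩,
        Finset.HasAntidiagonal.mem_antidiagonal.1 hp'⟩)
      rw [Finset.HasAntidiagonal.mem_antidiagonal.1 hp']
      exact hPμ
    have hWeq : W = Sν ×ˢ Sb := by
      ext p
      rw [hW, hSν, hSb]
      simp only [Finset.mem_filter, Finset.mem_product]
      constructor
      · rintro ⟨⟨h1', h2'⟩, h3'⟩
        have hble : ∀ i ∈ I, p.2 i ≤ a i := by
          intro i hi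
          have := h3' i hi
          rw [Finsupp.add_apply] at this
          omega
        have hbeq := claimA p.2 h2' hble
        refine ⟨⟨h1', fun i hi => ?_⟩, h2', hbeq⟩
        have := h3' i hi
        rw [Finsupp.add_apply] at this
        have := hbeq i hi
        omega
      · rintro ⟨⟨h1', hν⟩, h2', hb⟩
        refine ⟨⟨h1', h2'⟩, fun i hi => ?_⟩
        rw [Finsupp.add_apply, hν i hi, hb i hi, zero_add]
    have h4 : ∑ p ∈ Sν ×ˢ Sb, pw.coeff p.1 * f.coeff p.2 * ∏ i, y i ^ (p.1 + p.2) i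
        = (∑ ν ∈ Sν, pw.coeff ν * ∏ i, y i ^ ν i)
          * (∑ b ∈ Sb, f.coeff b * ∏ i, y i ^ b i) := by
      rw [Finset.sum_mul_sum, Finset.sum_product]
      refine Finset.sum_congr rfl fun ν _ => Finset.sum_congr rfl fun b _ => ?_
      have hprod : ∏ i, y i ^ (ν + b) i = (∏ i, y i ^ ν i) * (∏ i, y i ^ b i) := by
        rw [← Finset.prod_mul_distrib]
        exact Finset.prod_congr rfl fun i _ => by rw [Finsupp.add_apply, pow_add]
      rw [hprod]; ring
    rw [h1, h2, hWeq, h4, step5 y, mul_comm]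
  -- package as polynomial identity
  set Q : MvPolynomial (Fin n) ℝ := ∑ j ∈ Iᶜ, X j with hQ
  set Fp : MvPolynomial (Fin n) ℝ := ∑ b ∈ Sb, monomial b (f.coeff b) with hFp
  set Gp : MvPolynomial (Fin n) ℝ := ∑ μ ∈ B, monomial μ (g.coeff μ) with hGp
  have hevalF : ∀ y : Fin n → ℝ, eval y Fp = ∑ b ∈ Sb, f.coeff b * ∏ i, y i ^ b i := by
    intro y
    rw [hFp, map_sum]
    exact Finset.sum_congr rfl fun b _ => by rw [eval_monomial, Finsupp.prod_pow]
  have hevalG : ∀ y : Fin n → ℝ, eval y Gp = ∑ μ ∈ B, g.coeff μ * ∏ i, y i ^ μ i := by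
    intro y
    rw [hGp, map_sum]
    exact Finset.sum_congr rfl fun μ _ => by rw [eval_monomial, Finsupp.prod_pow]
  have hpoly : Gp = Fp * Q ^ N := by
    apply MvPolynomial.funext
    intro y
    rw [hevalG y, map_mul, map_pow, hevalF y, key y]
    congr 2
    rw [hQ, map_sum]
    simp only [eval_X]
  have hGpNN : NN Gp := by
    intro κ
    rw [hGp, MvPolynomial.coeff_sum]
    refine Finset.sum_nonneg fun μ _ => ?_
    rw [MvPolynomial.coeff_monomial]
    split
    · exact hgNN _
    · exact le_refl 0
  have hFpne : Fp ≠ 0 := by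
    have hca : Fp.coeff a = f.coeff a := by
      rw [hFp, MvPolynomial.coeff_sum]
      rw [Finset.sum_eq_single_of_mem a
        (by rw [hSb, Finset.mem_filter]; exact ⟨hasupp, fun i _ => rfl⟩)]
      · rw [MvPolynomial.coeff_monomial, if_pos rfl]
      · intro b _ hne; rw [MvPolynomial.coeff_monomial, if_neg hne]
    intro h0
    rw [h0, MvPolynomial.coeff_zero] at hca
    exact (MvPolynomial.mem_support_iff.1 hasupp) hca.symm
  have hQne : Q ≠ 0 := by
    intro h0
    have h1 : Q.coeff (Finsupp.single j 1) = 1 := by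
      rw [hQ, MvPolynomial.coeff_sum]
      rw [Finset.sum_eq_single_of_mem j (Finset.mem_compl.2 hj)]
      · rw [MvPolynomial.coeff_X', if_pos rfl]
      · intro j' _ hne
        rw [MvPolynomial.coeff_X']
        rw [if_neg]
        intro hcontra
        exact hne ((Finsupp.single_left_inj one_ne_zero).1 hcontra)
    rw [h0, MvPolynomial.coeff_zero] at h1
    norm_num at h1
  have hGpne : Gp ≠ 0 := by
    rw [hpoly]
    exact mul_ne_zero hFpne (pow_ne_zero _ hQne)
  have hGppos : 0 < eval x Gp := hGpNN.eval_pos hGpne hx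
  have hQxpos : 0 < ∑ j ∈ Iᶜ, x j :=
    Finset.sum_pos (fun i _ => hx i) ⟨j, Finset.mem_compl.2 hj⟩
  have hpow : 0 < (∑ j ∈ Iᶜ, x j) ^ N := pow_pos hQxpos N
  have h5 : 0 < (∑ b ∈ Sb, f.coeff b * ∏ i, x i ^ b i) * (∑ j ∈ Iᶜ, x j) ^ N := by
    rw [← key x, ← hevalG x]
    exact hGppos
  by_contra hcontra
  push_neg at hcontra
  nlinarith

end PolyaAux


open Filter Topology

namespace PolyaAux

lemma cast_sub_abs (m k : ℕ) : |((m - k : ℕ) : ℝ) - ((m : ℝ) - k)| ≤ k := by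
  rcases le_total k m with h | h
  · rw [Nat.cast_sub h]; simp
  · have h0 : (m - k : ℕ) = 0 := Nat.sub_eq_zero_of_le h
    have h1 : (m : ℝ) ≤ k := by exact_mod_cast h
    have h2 : (0:ℝ) ≤ m := Nat.cast_nonneg m
    rw [h0, Nat.cast_zero, abs_le]
    constructor <;> nlinarith

lemma tendsto_descFactorial_div {t : ℕ → ℝ} {m : ℕ → ℕ} {c : ℝ}
    (ht : Tendsto t atTop atTop)
    (hc : Tendsto (fun N => (m N : ℝ) / t N) atTop (𝓝 c)) (k : ℕ) :
    Tendsto (fun N => ((m N).descFactorial k : ℝ) / (t N) ^ k) atTop (𝓝 (c ^ k)) := by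
  induction k with
  | zero => simpa using tendsto_const_nhds
  | succ k ih =>
    have h1 : Tendsto (fun N => ((m N - k : ℕ) : ℝ) / t N) atTop (𝓝 c) := by
      have hdiff : Tendsto (fun N => ((m N - k : ℕ) : ℝ) / t N - (m N : ℝ) / t N)
          atTop (𝓝 0) := by
        have hsq : Tendsto (fun N => (2 * k : ℝ) * |1 / t N|) atTop (𝓝 0) := by
          have h2 := (tendsto_const_nhds (x := (1:ℝ))).div_atTop ht
          have := (tendsto_const_nhds (x := (2 * k:ℝ))).mul h2.abs
          simpa using this
        refine squeeze_zero_norm ?_ hsq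
        intro N
        have heq : ((m N - k : ℕ) : ℝ) / t N - (m N : ℝ) / t N
            = (((m N - k : ℕ) : ℝ) - ((m N : ℝ) - k)) * (1 / t N) + (-(k : ℝ)) * (1 / t N) := by
          ring
        rw [Real.norm_eq_abs, heq]
        calc |(((m N - k : ℕ) : ℝ) - ((m N : ℝ) - k)) * (1 / t N) + (-(k : ℝ)) * (1 / t N)|
            ≤ |(((m N - k : ℕ) : ℝ) - ((m N : ℝ) - k)) * (1 / t N)| + |(-(k : ℝ)) * (1 / t N)| :=
              abs_add_le _ _
          _ ≤ (k : ℝ) * |1 / t N| + (k : ℝ) * |1 / t N| := by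
              rw [abs_mul, abs_mul]
              gcongr
              · exact cast_sub_abs _ _
              · rw [abs_neg, abs_of_nonneg (Nat.cast_nonneg k)]
          _ = (2 * k : ℝ) * |1 / t N| := by ring
      have := hdiff.add hc
      simpa using this
    have hmul := ih.mul h1
    have hpow : c ^ k * c = c ^ (k + 1) := (pow_succ c k).symm
    rw [hpow] at hmul
    refine hmul.congr' ?_
    filter_upwards [ht.eventually_ge_atTop 1] with N hN
    have htN : t N ≠ 0 := by linarith
    rw [Nat.descFactorial_succ]
    push_cast
    field_simp
    ring

end PolyaAux


open MvPolynomial Finset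

namespace PolyaAux

variable {n : ℕ}

/-- The "falling factorial substitution" of `f` at `μ`. -/
noncomputable def Pfun (f : MvPolynomial (Fin n) ℝ) (μ : Fin n →₀ ℕ) : ℝ :=
  ∑ a ∈ f.support, f.coeff a * ∏ i, ((μ i).descFactorial (a i) : ℝ)

lemma coeff_eq_Pfun {d : ℕ} {f : MvPolynomial (Fin n) ℝ} (hhom : f.IsHomogeneous d)
    (N : ℕ) : ∀ μ : Fin n →₀ ℕ, (∑ i, μ i) = N + d →
    ((∑ i, X i) ^ N * f).coeff μ * ∏ i, ((μ i).factorial : ℝ)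
      = (N.factorial : ℝ) * Pfun f μ := by
  classical
  induction N with
  | zero =>
    intro μ hμ
    rw [pow_zero, one_mul, Nat.factorial_zero, Nat.cast_one, one_mul, Pfun]
    rw [Finset.sum_eq_single μ]
    · rcases eq_or_ne (f.coeff μ) 0 with h | h
      · simp [h]
      · have hself : ∀ i, ((μ i).descFactorial (μ i) : ℝ) = ((μ i).factorial : ℝ) := by
          intro i; rw [Nat.descFactorial_self]
        rw [Finset.prod_congr rfl (fun i _ => hself i), mul_comm]
    · intro a ha hne
      -- ∃ i, μ i < a i
      have hsum : ∑ i, a i = d := by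
        have h := hhom (MvPolynomial.mem_support_iff.1 ha)
        rw [Pi.one_def, ← Finsupp.degree_eq_weight_one] at h
        rw [← h]
        exact (Finset.sum_subset (Finset.subset_univ _)
          (fun i _ hi => Finsupp.notMem_support_iff.1 hi)).symm
      have hex : ∃ i, μ i < a i := by
        by_contra hno
        push_neg at hno
        have heq : ∀ i ∈ Finset.univ, a i = μ i := by
          rw [← Finset.sum_eq_sum_iff_of_le (fun i _ => hno i)]
          rw [hsum, hμ]; omega
        exact hne (Finsupp.ext fun i => (heq i (Finset.mem_univ i)).symm ▸ rfl)
      obtain ⟨i0, hi0⟩ := hex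
      have : ((μ i0).descFactorial (a i0) : ℝ) = 0 := by
        rw [Nat.descFactorial_eq_zero_iff_lt.2 hi0, Nat.cast_zero]
      rw [Finset.prod_eq_zero (Finset.mem_univ i0) this, mul_zero]
    · intro h
      rw [MvPolynomial.notMem_support_iff.1 h, zero_mul]
  | succ N ih =>
    intro μ hμ
    have hrw : ((∑ i, X i) ^ (N + 1) * f : MvPolynomial (Fin n) ℝ)
        = ∑ i, (X i * ((∑ i, X i) ^ N * f)) := by
      rw [pow_succ', mul_assoc, Finset.sum_mul]
    rw [hrw, MvPolynomial.coeff_sum]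
    set g : MvPolynomial (Fin n) ℝ := (∑ i, X i) ^ N * f with hg
    have hterm : ∀ i : Fin n,
        g.coeff (μ - Finsupp.single i 1) * ∏ k, (((μ - Finsupp.single i 1 : Fin n →₀ ℕ) k).factorial : ℝ)
          = (N.factorial : ℝ) * Pfun f (μ - Finsupp.single i 1) ∨ μ i = 0 := by
      intro i
      rcases Nat.eq_zero_or_pos (μ i) with h | h
      · exact Or.inr h
      · refine Or.inl (ih _ ?_)
        have h1 : ∀ k ∈ Finset.univ.erase i, (μ - Finsupp.single i 1 : Fin n →₀ ℕ) k = μ k := by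
          intro k hk
          rw [Finsupp.tsub_apply, Finsupp.single_apply,
            if_neg (Finset.ne_of_mem_erase hk).symm, Nat.sub_zero]
        have e1 : ∑ k, (μ - Finsupp.single i 1 : Fin n →₀ ℕ) k
            = (∑ k ∈ Finset.univ.erase i, μ k) + (μ i - 1) := by
          rw [← Finset.sum_erase_add _ _ (Finset.mem_univ i)]
          congr 1
          · exact Finset.sum_congr rfl h1
          · rw [Finsupp.tsub_apply, Finsupp.single_apply, if_pos rfl]
        have e2 : (∑ k ∈ Finset.univ.erase i, μ k) + μ i = N + 1 + d := by
          rw [Finset.sum_erase_add _ _ (Finset.mem_univ i)]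
          exact hμ
        omega
    -- multiply out
    have key : (∑ i, (X i * g).coeff μ) * ∏ k, ((μ k).factorial : ℝ)
        = (N.factorial : ℝ) * ∑ i, (μ i : ℝ) * Pfun f (μ - Finsupp.single i 1) := by
      rw [Finset.sum_mul, Finset.mul_sum]
      refine Finset.sum_congr rfl fun i _ => ?_
      rw [MvPolynomial.coeff_X_mul']
      rcases Nat.eq_zero_or_pos (μ i) with h | h
      · rw [if_neg (by simp [Finsupp.mem_support_iff, h]), h]
        simp
      · rw [if_pos (by simp [Finsupp.mem_support_iff]; omega)]
        have h1 : ∀ k ∈ Finset.univ.erase i,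
            (((μ - Finsupp.single i 1 : Fin n →₀ ℕ) k).factorial : ℝ) = ((μ k).factorial : ℝ) := by
          intro k hk
          rw [Finsupp.tsub_apply, Finsupp.single_apply,
            if_neg (Finset.ne_of_mem_erase hk).symm, Nat.sub_zero]
        have h2 : (μ - Finsupp.single i 1 : Fin n →₀ ℕ) i = μ i - 1 := by
          rw [Finsupp.tsub_apply, Finsupp.single_apply, if_pos rfl]
        have e1 : ∏ k, (((μ - Finsupp.single i 1 : Fin n →₀ ℕ) k).factorial : ℝ)
            = (∏ k ∈ Finset.univ.erase i, ((μ k).factorial : ℝ)) * ((μ i - 1).factorial : ℝ) := by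
          rw [← Finset.prod_erase_mul _ _ (Finset.mem_univ i)]
          congr 1
          · exact Finset.prod_congr rfl h1
          · rw [h2]
        have e2 : ∏ k, ((μ k).factorial : ℝ)
            = (∏ k ∈ Finset.univ.erase i, ((μ k).factorial : ℝ)) * ((μ i).factorial : ℝ) :=
          (Finset.prod_erase_mul _ _ (Finset.mem_univ i)).symm
        have h3 : ((μ i).factorial : ℝ) = (μ i : ℝ) * ((μ i - 1).factorial : ℝ) := by
          have h4 := Nat.mul_factorial_pred h.ne'
          rw [← h4]; push_cast; ring
        have hfact : ∏ k, ((μ k).factorial : ℝ)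
            = (μ i : ℝ) * ∏ k, (((μ - Finsupp.single i 1 : Fin n →₀ ℕ) k).factorial : ℝ) := by
          rw [e1, e2, h3]; ring
        rcases hterm i with hi | hi
        · rw [hfact, ← mul_assoc, mul_comm (g.coeff _) (μ i : ℝ), mul_assoc, hi]; ring
        · omega
    rw [key]
    -- now the combinatorial identity : ∑ i μ i * Pfun (μ - e i) = (N+1) * Pfun μ
    have main : ∑ i, (μ i : ℝ) * Pfun f (μ - Finsupp.single i 1) = ((N:ℝ) + 1) * Pfun f μ := by
      unfold Pfun
      simp only [Finset.mul_sum]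
      rw [Finset.sum_comm]
      refine Finset.sum_congr rfl fun a ha => ?_
      -- per a : ∑ i, μ i * (c_a * ∏ df((μ-e_i)_k, a_k)) = (N+1) * (c_a * ∏ df)
      have hsum : ∑ i, a i = d := by
        have h := hhom (MvPolynomial.mem_support_iff.1 ha)
        rw [Pi.one_def, ← Finsupp.degree_eq_weight_one] at h
        rw [← h]
        exact (Finset.sum_subset (Finset.subset_univ _)
          (fun i _ hi => Finsupp.notMem_support_iff.1 hi)).symm
      have step1 : ∀ i : Fin n, (μ i : ℝ) * ∏ k, (((μ - Finsupp.single i 1 : Fin n →₀ ℕ) k).descFactorial (a k) : ℝ)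
          = ((μ i).descFactorial (a i + 1) : ℝ) * ∏ k ∈ Finset.univ.erase i, ((μ k).descFactorial (a k) : ℝ) := by
        intro i
        rw [← Finset.prod_erase_mul _ _ (Finset.mem_univ i)]
        have h1 : ∀ k ∈ Finset.univ.erase i,
            (((μ - Finsupp.single i 1 : Fin n →₀ ℕ) k).descFactorial (a k) : ℝ)
              = ((μ k).descFactorial (a k) : ℝ) := by
          intro k hk
          rw [Finsupp.tsub_apply, Finsupp.single_apply,
            if_neg (Finset.ne_of_mem_erase hk).symm, Nat.sub_zero]
        rw [Finset.prod_congr rfl h1]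
        have h2 : (μ - Finsupp.single i 1 : Fin n →₀ ℕ) i = μ i - 1 := by
          rw [Finsupp.tsub_apply, Finsupp.single_apply, if_pos rfl]
        have h3 : (μ i : ℝ) * ((μ i - 1).descFactorial (a i) : ℝ)
            = ((μ i).descFactorial (a i + 1) : ℝ) := by
          rcases Nat.eq_zero_or_pos (μ i) with h | h
          · rw [h]; simp [Nat.zero_descFactorial_succ]
          · obtain ⟨m, hm⟩ := Nat.exists_eq_succ_of_ne_zero (Nat.pos_iff_ne_zero.1 h)
            rw [hm, Nat.succ_sub_one, Nat.succ_descFactorial_succ]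
            push_cast; ring
        rw [h2, ← h3]; ring
      have step2 : ∑ i, (μ i : ℝ) * (f.coeff a * ∏ k, (((μ - Finsupp.single i 1 : Fin n →₀ ℕ) k).descFactorial (a k) : ℝ))
          = f.coeff a * ∑ i, ((μ i).descFactorial (a i + 1) : ℝ)
              * ∏ k ∈ Finset.univ.erase i, ((μ k).descFactorial (a k) : ℝ) := by
        rw [Finset.mul_sum]
        refine Finset.sum_congr rfl fun i _ => ?_
        rw [← step1 i]; ring
      rw [step2]
      have inner : ∑ i, ((μ i).descFactorial (a i + 1) : ℝ)
          * ∏ k ∈ Finset.univ.erase i, ((μ k).descFactorial (a k) : ℝ)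
          = ((N:ℝ) + 1) * ∏ k, ((μ k).descFactorial (a k) : ℝ) := by
        by_cases hcase : ∀ i, a i ≤ μ i
        · have hterm2 : ∀ i : Fin n, ((μ i).descFactorial (a i + 1) : ℝ)
              * ∏ k ∈ Finset.univ.erase i, ((μ k).descFactorial (a k) : ℝ)
              = ((μ i : ℝ) - (a i : ℝ)) * ∏ k, ((μ k).descFactorial (a k) : ℝ) := by
            intro i
            rw [Nat.descFactorial_succ, ← Finset.prod_erase_mul _
              (fun k => ((μ k).descFactorial (a k) : ℝ)) (Finset.mem_univ i)]
            push_cast [Nat.cast_sub (hcase i)]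
            ring
          rw [Finset.sum_congr rfl fun i _ => hterm2 i, ← Finset.sum_mul]
          congr 1
          rw [Finset.sum_sub_distrib]
          have c1 : ∑ i, ((μ i : ℕ) : ℝ) = ((N:ℝ) + 1 + d) := by
            rw [← Nat.cast_sum]
            rw [hμ]; push_cast; ring
          have c2 : ∑ i, ((a i : ℕ) : ℝ) = (d : ℝ) := by
            rw [← Nat.cast_sum, hsum]
          rw [c1, c2]; ring
        · push_neg at hcase
          obtain ⟨i0, hi0⟩ := hcase
          have hz : ((μ i0).descFactorial (a i0) : ℝ) = 0 := by
            rw [Nat.descFactorial_eq_zero_iff_lt.2 hi0, Nat.cast_zero]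
          have hz' : ((μ i0).descFactorial (a i0 + 1) : ℝ) = 0 := by
            rw [Nat.descFactorial_eq_zero_iff_lt.2 (by omega), Nat.cast_zero]
          have right0 : ∏ k, ((μ k).descFactorial (a k) : ℝ) = 0 :=
            Finset.prod_eq_zero (Finset.mem_univ i0) hz
          rw [right0, mul_zero]
          refine Finset.sum_eq_zero fun i _ => ?_
          rcases eq_or_ne i i0 with rfl | hne
          · rw [hz', zero_mul]
          · rw [Finset.prod_eq_zero (Finset.mem_erase.2 ⟨Ne.symm hne, Finset.mem_univ i0⟩) hz,
              mul_zero]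
      rw [inner]; ring
    rw [main, ← mul_assoc]
    congr 1
    rw [Nat.factorial_succ]
    push_cast; ring

end PolyaAux


open MvPolynomial Finset Filter Topology

namespace PolyaAux

variable {n : ℕ}

lemma sum_univ_eq_degree (μ : Fin n →₀ ℕ) : Finsupp.degree μ = ∑ i, μ i := by
  rw [Finsupp.degree]
  exact Finset.sum_subset (Finset.subset_univ _)
    (fun i _ hi => Finsupp.notMem_support_iff.1 hi)

lemma support_sum_eq {d : ℕ} {f : MvPolynomial (Fin n) ℝ} (hhom : f.IsHomogeneous d)
    {a : Fin n →₀ ℕ} (ha : a ∈ f.support) : ∑ i, a i = d := by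
  have h := hhom (MvPolynomial.mem_support_iff.1 ha)
  rw [Pi.one_def, ← Finsupp.degree_eq_weight_one] at h
  rw [← sum_univ_eq_degree]
  exact h

set_option maxHeartbeats 2000000 in
lemma backward {n d : ℕ} {f : MvPolynomial (Fin n) ℝ} (hhom : f.IsHomogeneous d)
    (hcopos : ∀ u : Fin n → ℝ, (∀ i, 0 ≤ u i) → 0 ≤ eval u f)
    (hfaces : ∃ S : Set (Set (Fin n)),
      {x : Fin n → ℝ | (∀ i, 0 ≤ x i) ∧ (∑ i, x i = 1) ∧ eval x f = 0} =
        ⋃ I ∈ S, {x : Fin n → ℝ | (∀ i, 0 ≤ x i) ∧ (∑ i, x i = 1) ∧ ∀ i ∈ I, x i = 0})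
    (hRHS : ∀ I : Finset (Fin n),
      (∃ x : Fin n → ℝ, (∀ i, 0 ≤ x i) ∧ (∑ i, x i = 1) ∧ ∀ i ∈ I, x i = 0) →
      (∀ x : Fin n → ℝ, (∀ i, 0 ≤ x i) → (∑ i, x i = 1) → (∀ i ∈ I, x i = 0) →
        eval x f = 0) →
      ((∀ b ∈ f.support, f.coeff b < 0 →
          ∃ a ∈ f.support, 0 < f.coeff a ∧ ∀ i ∈ I, a i ≤ b i) ∧
       (∀ a ∈ f.support, 0 < f.coeff a →
          (¬ ∃ a' ∈ f.support, 0 < f.coeff a' ∧ (∀ i ∈ I, a' i ≤ a i) ∧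
              ∃ i ∈ I, a' i < a i) →
          ∀ x : Fin n → ℝ, (∀ i, 0 < x i) →
            0 < ∑ b ∈ f.support.filter (fun b => ∀ i ∈ I, b i = a i),
                  f.coeff b * ∏ i, x i ^ b i))) :
    ∃ N : ℕ, ∀ μ : Fin n →₀ ℕ, 0 ≤ ((∑ i, X i) ^ N * f).coeff μ := by
  classical
  by_contra hno
  push_neg at hno
  choose μs hμs using hno
  -- degrees
  have hhomg : ∀ N : ℕ, (((∑ i, X i) ^ N * f) : MvPolynomial (Fin n) ℝ).IsHomogeneous (N + d) := by
    intro N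
    have h1 : ((∑ i : Fin n, X i : MvPolynomial (Fin n) ℝ)).IsHomogeneous 1 :=
      IsHomogeneous.sum _ _ _ (fun i _ => isHomogeneous_X _ _)
    have h2 := h1.pow N
    rw [one_mul] at h2
    have := h2.mul hhom
    rwa [] at this
  have hdeg : ∀ N, ∑ i, μs N i = N + d := by
    intro N
    by_contra hne
    have hz : ((∑ i, X i) ^ N * f).coeff (μs N) = 0 :=
      (hhomg N).coeff_eq_zero (by rw [sum_univ_eq_degree]; exact hne)
    have := hμs N
    rw [hz] at this
    exact lt_irrefl 0 this
  have hP : ∀ N, Pfun f (μs N) < 0 := by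
    intro N
    have hid := coeff_eq_Pfun hhom N (μs N) (hdeg N)
    have hfac : (0:ℝ) < ∏ i, ((μs N i).factorial : ℝ) :=
      Finset.prod_pos fun i _ => by exact_mod_cast (μs N i).factorial_pos
    have hNfac : (0:ℝ) < (N.factorial : ℝ) := by exact_mod_cast N.factorial_pos
    nlinarith [hμs N]
  -- compactness
  set xs : ℕ → (Fin n → ℝ) := fun N i => (μs N i : ℝ) / ((N + d : ℕ) : ℝ) with hxs
  have hxmem : ∀ N, xs N ∈ Set.Icc (0 : Fin n → ℝ) 1 := by
    intro N
    constructor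
    · intro i
      exact div_nonneg (Nat.cast_nonneg _) (Nat.cast_nonneg _)
    · intro i
      have hle : μs N i ≤ N + d := by
        rw [← hdeg N]
        exact Finset.single_le_sum (fun j _ => Nat.zero_le _) (Finset.mem_univ i)
      rcases Nat.eq_zero_or_pos (N + d) with h0 | h0
      · have : μs N i = 0 := by omega
        simp [hxs, this]
      · have : (0:ℝ) < ((N + d : ℕ) : ℝ) := by exact_mod_cast h0
        exact div_le_one_of_le₀ (Nat.cast_le.2 hle) (le_of_lt this)
  obtain ⟨xst, hxstmem, φ, hφ, hφt⟩ :=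
    (isCompact_Icc (a := (0 : Fin n → ℝ)) (b := 1)).tendsto_subseq hxmem
  have hx0 : ∀ i, 0 ≤ xst i := fun i => hxstmem.1 i
  have htT : Tendsto (fun N => ((φ N + d : ℕ) : ℝ)) atTop atTop := by
    apply tendsto_natCast_atTop_atTop.comp
    exact (tendsto_add_atTop_nat d).comp hφ.tendsto_atTop
  have hcoord : ∀ i, Tendsto (fun N => (μs (φ N) i : ℝ) / ((φ N + d : ℕ) : ℝ))
      atTop (𝓝 (xst i)) := by
    intro i
    have := (tendsto_pi_nhds.1 hφt) i
    exact this
  -- sum of limits is 1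
  have hsum1 : ∑ i, xst i = 1 := by
    have h1 : Tendsto (fun N => ∑ i, xs (φ N) i) atTop (𝓝 (∑ i, xst i)) :=
      tendsto_finset_sum _ (fun i _ => hcoord i)
    have h2 : (fun N => ∑ i, xs (φ N) i) =ᶠ[atTop] (fun _ => (1:ℝ)) := by
      filter_upwards [htT.eventually_ge_atTop 1] with N hN
      have hpos : (0:ℝ) < ((φ N + d : ℕ) : ℝ) := by linarith
      rw [hxs]
      simp only
      rw [← Finset.sum_div]
      rw [show (∑ i, (μs (φ N) i : ℝ)) = ((φ N + d : ℕ) : ℝ) by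
        rw [← Nat.cast_sum]; exact_mod_cast hdeg (φ N)]
      exact div_self (ne_of_gt hpos)
    exact tendsto_nhds_unique (h1.congr' h2) tendsto_const_nhds
  -- eval xst f = 0
  have hfzero : eval xst f = 0 := by
    have hlim : Tendsto (fun N => Pfun f (μs (φ N)) / ((φ N + d : ℕ) : ℝ) ^ d)
        atTop (𝓝 (eval xst f)) := by
      have hev : eval xst f = ∑ a ∈ f.support, f.coeff a * ∏ i, xst i ^ a i :=
        MvPolynomial.eval_eq' xst f
      rw [hev]
      have hsum : Tendsto (fun N => ∑ a ∈ f.support, f.coeff a *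
          ∏ i, (((μs (φ N) i).descFactorial (a i) : ℝ) / ((φ N + d : ℕ) : ℝ) ^ (a i)))
          atTop (𝓝 (∑ a ∈ f.support, f.coeff a * ∏ i, xst i ^ a i)) := by
        refine tendsto_finset_sum _ fun a _ => ?_
        refine Tendsto.const_mul _ ?_
        refine tendsto_finset_prod _ fun i _ => ?_
        exact tendsto_descFactorial_div htT (hcoord i) (a i)
      refine hsum.congr' ?_
      filter_upwards [htT.eventually_ge_atTop 1] with N hN
      have hpos : (0:ℝ) < ((φ N + d:ℕ):ℝ) := by linarith
      rw [Pfun, Finset.sum_div]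
      refine Finset.sum_congr rfl fun a ha => ?_
      rw [mul_div_assoc]
      congr 1
      rw [Finset.prod_div_distrib]
      congr 1
      rw [Finset.prod_pow_eq_pow_sum]
      rw [support_sum_eq hhom ha]
    have hle : eval xst f ≤ 0 := by
      refine le_of_tendsto hlim ?_
      filter_upwards [htT.eventually_ge_atTop 1] with N hN
      have hpos : (0:ℝ) < ((φ N + d:ℕ):ℝ) ^ d := by positivity
      exact le_of_lt (div_neg_of_neg_of_pos (hP (φ N)) hpos)
    exact le_antisymm hle (hcopos xst hx0)
  -- the face
  set If : Finset (Fin n) := Finset.univ.filter (fun i => xst i = 0) with hIf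
  have hIfmem : ∀ i, i ∈ If ↔ xst i = 0 := by
    intro i; rw [hIf, Finset.mem_filter]; simp
  have hne : ∃ x : Fin n → ℝ, (∀ i, 0 ≤ x i) ∧ (∑ i, x i = 1) ∧ ∀ i ∈ If, x i = 0 :=
    ⟨xst, hx0, hsum1, fun i hi => (hIfmem i).1 hi⟩
  have hvan : ∀ x : Fin n → ℝ, (∀ i, 0 ≤ x i) → (∑ i, x i = 1) → (∀ i ∈ If, x i = 0) →
      eval x f = 0 := by
    obtain ⟨S, hS⟩ := hfaces
    intro y hy0 hy1 hyI
    have hxstin : xst ∈ {x : Fin n → ℝ | (∀ i, 0 ≤ x i) ∧ (∑ i, x i = 1) ∧ eval x f = 0} :=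
      ⟨hx0, hsum1, hfzero⟩
    rw [hS] at hxstin
    simp only [Set.mem_iUnion] at hxstin
    obtain ⟨I0, hI0S, hxstI0⟩ := hxstin
    have hyin : y ∈ ⋃ I ∈ S, {x : Fin n → ℝ | (∀ i, 0 ≤ x i) ∧ (∑ i, x i = 1) ∧
        ∀ i ∈ I, x i = 0} := by
      simp only [Set.mem_iUnion]
      refine ⟨I0, hI0S, hy0, hy1, fun i hi => ?_⟩
      have : xst i = 0 := hxstI0.2.2 i hi
      exact hyI i ((hIfmem i).2 this)
    rw [← hS] at hyin
    exact hyin.2.2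
  obtain ⟨hc1, hc2⟩ := hRHS If hne hvan
  -- patterns
  set pat : (Fin n →₀ ℕ) → (Fin n →₀ ℕ) := fun a => Finsupp.filter (fun i => i ∈ If) a
    with hpatdef
  have hpat_mem : ∀ (a : Fin n →₀ ℕ) (i : Fin n), i ∈ If → pat a i = a i := by
    intro a i hi
    rw [hpatdef]
    exact Finsupp.filter_apply_pos _ _ hi
  have hpat_not : ∀ (a : Fin n →₀ ℕ) (i : Fin n), i ∉ If → pat a i = 0 := by
    intro a i hi
    rw [hpatdef]
    exact Finsupp.filter_apply_neg _ _ hi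
  have hpat_eq_iff : ∀ a b : Fin n →₀ ℕ, (pat a = pat b ↔ ∀ i ∈ If, a i = b i) := by
    intro a b
    constructor
    · intro h i hi
      have h2 := DFunLike.congr_fun h i
      rwa [hpat_mem a i hi, hpat_mem b i hi] at h2
    · intro h
      ext i
      by_cases hi : i ∈ If
      · rw [hpat_mem a i hi, hpat_mem b i hi]; exact h i hi
      · rw [hpat_not a i hi, hpat_not b i hi]
  have hpat_le : ∀ a b : Fin n →₀ ℕ, (∀ i ∈ If, a i ≤ b i) → pat a ≤ pat b := by
    intro a b h
    rw [Finsupp.le_def]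
    intro i
    by_cases hi : i ∈ If
    · rw [hpat_mem a i hi, hpat_mem b i hi]; exact h i hi
    · rw [hpat_not a i hi, hpat_not b i hi]
  set Pats : Finset (Fin n →₀ ℕ) := f.support.image pat with hPatsdef
  set PosPats : Finset (Fin n →₀ ℕ) :=
    (f.support.filter (fun a => 0 < f.coeff a)).image pat with hPosPatsdef
  set M : Finset (Fin n →₀ ℕ) :=
    PosPats.filter (fun m => ∀ π ∈ PosPats, π ≤ m → π = m) with hMdef
  have hMsubPos : M ⊆ PosPats := by rw [hMdef]; exact Finset.filter_subset _ _
  have hPossubPats : PosPats ⊆ Pats := by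
    rw [hPosPatsdef, hPatsdef]
    exact Finset.image_subset_image (Finset.filter_subset _ _)
  have hMsub : M ⊆ Pats := hMsubPos.trans hPossubPats
  have hMmin : ∀ π ∈ PosPats, ∃ m ∈ M, m ≤ π := by
    intro π hπ
    obtain ⟨m, hm, hmin⟩ : ∃ m ∈ PosPats.filter (· ≤ π), ∀ x ∈ PosPats.filter (· ≤ π), ¬ x < m := by
      obtain ⟨m, hm⟩ := Finset.exists_minimal (s := PosPats.filter (· ≤ π))
        ⟨π, Finset.mem_filter.2 ⟨hπ, le_refl π⟩⟩
      exact ⟨m, hm.prop, fun x hx => hm.not_lt hx⟩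
    obtain ⟨hmPos, hmle⟩ := Finset.mem_filter.1 hm
    refine ⟨m, ?_, hmle⟩
    rw [hMdef]
    refine Finset.mem_filter.2 ⟨hmPos, fun ρ hρ hρle => ?_⟩
    by_contra hne'
    exact hmin ρ (Finset.mem_filter.2 ⟨hρ, hρle.trans hmle⟩) (lt_of_le_of_ne hρle hne')
  have hdom : ∀ γ ∈ Pats, ∃ m ∈ M, m ≤ γ := by
    intro γ hγ
    rw [hPatsdef] at hγ
    obtain ⟨b, hb, rfl⟩ := Finset.mem_image.1 hγ
    rcases lt_trichotomy (f.coeff b) 0 with hneg | h0 | hpos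
    · obtain ⟨a, haA, hapos, hale⟩ := hc1 b hb hneg
      have hπ : pat a ∈ PosPats := by
        rw [hPosPatsdef]
        exact Finset.mem_image_of_mem pat (Finset.mem_filter.2 ⟨haA, hapos⟩)
      obtain ⟨m, hm, hmle⟩ := hMmin (pat a) hπ
      exact ⟨m, hm, hmle.trans (hpat_le a b hale)⟩
    · exact absurd h0 (MvPolynomial.mem_support_iff.1 hb)
    · have hπ : pat b ∈ PosPats := by
        rw [hPosPatsdef]
        exact Finset.mem_image_of_mem pat (Finset.mem_filter.2 ⟨hb, hpos⟩)
      exact hMmin (pat b) hπ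
  have hdom' : ∀ γ : Fin n →₀ ℕ, ∃ m : Fin n →₀ ℕ, γ ∈ Pats → (m ∈ M ∧ m ≤ γ) := by
    intro γ
    by_cases h : γ ∈ Pats
    · obtain ⟨m, hm, hle⟩ := hdom γ h
      exact ⟨m, fun _ => ⟨hm, hle⟩⟩
    · exact ⟨0, fun h' => absurd h' h⟩
  choose mf hmf using hdom'
  -- patterns vanish off If
  have hpat_offIf : ∀ γ ∈ Pats, ∀ j, j ∉ If → γ j = 0 := by
    intro γ hγ j hj
    rw [hPatsdef] at hγ
    obtain ⟨b, _, rfl⟩ := Finset.mem_image.1 hγ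
    exact hpat_not b j hj
  -- strict coordinate for γ ∈ Pats \ M
  have hstrict : ∀ γ : Fin n →₀ ℕ, γ ∈ Pats \ M →
      ∃ i0 : Fin n, i0 ∈ If ∧ mf γ i0 < γ i0 := by
    intro γ hγ
    obtain ⟨hγP, hγnM⟩ := Finset.mem_sdiff.1 hγ
    obtain ⟨hmM, hmle⟩ := hmf γ hγP
    have hne' : mf γ ≠ γ := by
      intro h
      exact hγnM (h ▸ hmM)
    have hex : ∃ i0, mf γ i0 < γ i0 := by
      by_contra hno'
      push_neg at hno'
      refine hne' (le_antisymm hmle ?_)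
      rw [Finsupp.le_def]
      exact hno'
    obtain ⟨i0, hi0⟩ := hex
    refine ⟨i0, ?_, hi0⟩
    by_contra hnotin
    rw [hpat_offIf γ hγP i0 hnotin] at hi0
    omega
  -- the W / V / T decomposition
  set tt : ℕ → ℝ := fun N => ((φ N + d : ℕ) : ℝ) with httdef
  set W : (Fin n →₀ ℕ) → ℕ → ℝ :=
    fun γ N => ∏ i ∈ If, ((μs (φ N) i).descFactorial (γ i) : ℝ) with hWdef
  set V : (Fin n →₀ ℕ) → ℕ → ℝ :=
    fun b N => ∏ j ∈ Ifᶜ, ((μs (φ N) j).descFactorial (b j) : ℝ) with hVdef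
  set T : (Fin n →₀ ℕ) → ℕ → ℝ :=
    fun γ N => ∑ b ∈ f.support.filter (fun b => pat b = γ), f.coeff b * V b N with hTdef
  set ws : (Fin n →₀ ℕ) → ℕ := fun γ => ∑ i ∈ If, γ i with hwsdef
  have hWnonneg : ∀ γ N, 0 ≤ W γ N := by
    intro γ N
    rw [hWdef]
    exact Finset.prod_nonneg fun i _ => Nat.cast_nonneg _
  have hVnonneg : ∀ b N, 0 ≤ V b N := by
    intro b N
    rw [hVdef]
    exact Finset.prod_nonneg fun i _ => Nat.cast_nonneg _
  have hbb : ∀ b ∈ f.support, (∑ i ∈ If, b i) + (∑ j ∈ Ifᶜ, b j) = d := by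
    intro b hb
    rw [Finset.sum_add_sum_compl]
    exact support_sum_eq hhom hb
  have hμle : ∀ N i, (μs (φ N) i : ℝ) ≤ tt N := by
    intro N i
    rw [httdef]
    have h : μs (φ N) i ≤ φ N + d := by
      rw [← hdeg (φ N)]
      exact Finset.single_le_sum (fun j _ => Nat.zero_le _) (Finset.mem_univ i)
    have h2 : ((μs (φ N) i : ℕ) : ℝ) ≤ ((φ N + d : ℕ) : ℝ) := by exact_mod_cast h
    exact h2
  have hwsfiber : ∀ γ : Fin n →₀ ℕ, ∀ b ∈ f.support.filter (fun b => pat b = γ),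
      (∑ i ∈ If, b i) = ws γ ∧ (∑ j ∈ Ifᶜ, b j) = d - ws γ ∧ ws γ ≤ d := by
    intro γ b hb
    obtain ⟨hbA, hbpat⟩ := Finset.mem_filter.1 hb
    have h2 : ∑ i ∈ If, b i = ws γ := by
      rw [hwsdef]
      refine Finset.sum_congr rfl fun i hi => ?_
      rw [← hbpat, hpat_mem b i hi]
    have h1 := hbb b hbA
    exact ⟨h2, by omega, by omega⟩
  have hsplit : ∀ N, Pfun f (μs (φ N)) = ∑ γ ∈ Pats, W γ N * T γ N := by
    intro N
    rw [Pfun]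
    rw [← Finset.sum_fiberwise_of_maps_to (t := Pats) (g := pat)
      (fun b hb => Finset.mem_image_of_mem pat hb)
      (fun b => f.coeff b * ∏ i, ((μs (φ N) i).descFactorial (b i) : ℝ))]
    refine Finset.sum_congr rfl fun γ hγ => ?_
    rw [hTdef]
    simp only
    rw [Finset.mul_sum]
    refine Finset.sum_congr rfl fun b hb => ?_
    obtain ⟨hbA, hbpat⟩ := Finset.mem_filter.1 hb
    have hprod : ∏ i, ((μs (φ N) i).descFactorial (b i) : ℝ)
        = (∏ i ∈ If, ((μs (φ N) i).descFactorial (b i) : ℝ)) * V b N := by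
      rw [hVdef]
      exact (Finset.prod_mul_prod_compl If _).symm
    have hWeq : ∏ i ∈ If, ((μs (φ N) i).descFactorial (b i) : ℝ) = W γ N := by
      rw [hWdef]
      refine Finset.prod_congr rfl fun i hi => ?_
      rw [← hbpat, hpat_mem b i hi]
    rw [hprod, hWeq]
    ring
  -- limits along minimal patterns
  have hMlim : ∀ m : Fin n →₀ ℕ, ∃ g0 : ℝ, m ∈ M → (0 < g0 ∧
      Tendsto (fun N => T m N / tt N ^ (d - ws m)) atTop (𝓝 g0)) := by
    intro m
    by_cases hm : m ∈ M
    swap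
    · exact ⟨1, fun h => absurd h hm⟩
    have hmPos := hMsubPos hm
    rw [hPosPatsdef] at hmPos
    obtain ⟨a₀, ha₀mem, ha₀pat⟩ := Finset.mem_image.1 hmPos
    obtain ⟨ha₀A, ha₀pos⟩ := Finset.mem_filter.1 ha₀mem
    have hminimal : ¬ ∃ a' ∈ f.support, 0 < f.coeff a' ∧ (∀ i ∈ If, a' i ≤ a₀ i) ∧
        ∃ i ∈ If, a' i < a₀ i := by
      rintro ⟨a', ha'A, ha'pos, ha'le, i0, hi0, hlt⟩
      have hπ : pat a' ∈ PosPats := by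
        rw [hPosPatsdef]
        exact Finset.mem_image_of_mem pat (Finset.mem_filter.2 ⟨ha'A, ha'pos⟩)
      have hlep : pat a' ≤ m := by
        rw [← ha₀pat]
        exact hpat_le a' a₀ ha'le
      rw [hMdef] at hm
      have heq := (Finset.mem_filter.1 hm).2 (pat a') hπ hlep
      have h1 : pat a' i0 = a' i0 := hpat_mem _ _ hi0
      have h2 : pat a₀ i0 = a₀ i0 := hpat_mem _ _ hi0
      rw [heq, ← ha₀pat, h2] at h1
      omega
    set xpos : Fin n → ℝ := fun i => if xst i = 0 then 1 else xst i with hxposdef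
    have hxpospos : ∀ i, 0 < xpos i := by
      intro i
      rw [hxposdef]
      simp only
      split
      · norm_num
      · rename_i h
        exact lt_of_le_of_ne (hx0 i) (Ne.symm h)
    have hval := hc2 a₀ ha₀A ha₀pos hminimal xpos hxpospos
    have hfib : f.support.filter (fun b => pat b = m)
        = f.support.filter (fun b => ∀ i ∈ If, b i = a₀ i) := by
      refine Finset.filter_congr fun b _ => ?_
      rw [← ha₀pat]
      exact hpat_eq_iff b a₀
    have hterm : ∀ b ∈ f.support.filter (fun b => pat b = m),
        f.coeff b * ∏ i, xpos i ^ b i = f.coeff b * ∏ j ∈ Ifᶜ, xst j ^ b j := by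
      intro b _
      congr 1
      rw [← Finset.prod_mul_prod_compl If (fun i => xpos i ^ b i)]
      have hIf1 : ∏ i ∈ If, xpos i ^ b i = 1 := by
        refine Finset.prod_eq_one fun i hi => ?_
        rw [hxposdef]
        simp only
        rw [if_pos ((hIfmem i).1 hi), one_pow]
      have hIfc : ∏ j ∈ Ifᶜ, xpos j ^ b j = ∏ j ∈ Ifᶜ, xst j ^ b j := by
        refine Finset.prod_congr rfl fun j hj => ?_
        have hne0 : ¬ xst j = 0 := fun h0 => (Finset.mem_compl.1 hj) ((hIfmem j).2 h0)
        rw [hxposdef]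
        simp only
        rw [if_neg hne0]
      rw [hIf1, hIfc, one_mul]
    have hvalue : (∑ b ∈ f.support.filter (fun b => ∀ i ∈ If, b i = a₀ i),
        f.coeff b * ∏ i, xpos i ^ b i)
        = ∑ b ∈ f.support.filter (fun b => pat b = m),
            f.coeff b * ∏ j ∈ Ifᶜ, xst j ^ b j := by
      rw [← hfib]
      exact Finset.sum_congr rfl hterm
    rw [hvalue] at hval
    refine ⟨_, fun _ => ⟨hval, ?_⟩⟩
    have hsum : Tendsto (fun N => ∑ b ∈ f.support.filter (fun b => pat b = m),
        f.coeff b * ∏ j ∈ Ifᶜ, (((μs (φ N) j).descFactorial (b j) : ℝ) / tt N ^ (b j)))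
        atTop (𝓝 (∑ b ∈ f.support.filter (fun b => pat b = m),
          f.coeff b * ∏ j ∈ Ifᶜ, xst j ^ b j)) := by
      refine tendsto_finset_sum _ fun b _ => ?_
      refine Tendsto.const_mul _ ?_
      refine tendsto_finset_prod _ fun j _ => ?_
      exact tendsto_descFactorial_div htT (hcoord j) (b j)
    refine hsum.congr' ?_
    filter_upwards [htT.eventually_ge_atTop 1] with N hN
    rw [hTdef]
    simp only
    rw [Finset.sum_div]
    refine Finset.sum_congr rfl fun b hb => ?_
    rw [mul_div_assoc]
    congr 1
    rw [hVdef]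
    simp only
    rw [Finset.prod_div_distrib, Finset.prod_pow_eq_pow_sum]
    obtain ⟨h1, h2, h3⟩ := hwsfiber m b hb
    rw [h2]
  choose g0 hg0 using hMlim
  have hg0pos : ∀ m ∈ M, 0 < g0 m := fun m hm => (hg0 m hm).1
  set C : ℝ := (∑ b ∈ f.support, |f.coeff b|) + 1 with hCdef
  have hCpos : 0 < C := by
    rw [hCdef]
    have h0 : 0 ≤ ∑ b ∈ f.support, |f.coeff b| := Finset.sum_nonneg fun b _ => abs_nonneg _
    linarith
  set K : ℝ := (Pats.card : ℝ) + 1 with hKdef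
  have hKpos : 0 < K := by rw [hKdef]; positivity
  have httnn : ∀ N, 0 ≤ tt N := by
    intro N
    rw [httdef]
    exact Nat.cast_nonneg _
  -- eventual lower bound for minimal-pattern terms
  have EvT : ∀ m ∈ M, ∀ᶠ N in atTop, (g0 m / 2) * tt N ^ (d - ws m) ≤ T m N := by
    intro m hm
    have h1 := (hg0 m hm).2
    have h2 : ∀ᶠ N in atTop, g0 m / 2 ≤ T m N / tt N ^ (d - ws m) :=
      h1.eventually (eventually_ge_nhds (by linarith [hg0pos m hm]))
    filter_upwards [h2, htT.eventually_ge_atTop 1] with N hN ht1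
    have hpos : (0:ℝ) < tt N ^ (d - ws m) := by positivity
    calc (g0 m / 2) * tt N ^ (d - ws m)
        ≤ (T m N / tt N ^ (d - ws m)) * tt N ^ (d - ws m) :=
          mul_le_mul_of_nonneg_right hN (le_of_lt hpos)
      _ = T m N := div_mul_cancel₀ _ (ne_of_gt hpos)
  -- eventual bound for non-minimal patterns
  have EvB : ∀ γ ∈ Pats \ M, ∀ᶠ N in atTop,
      -(g0 (mf γ) / (2 * K) * (W (mf γ) N * tt N ^ (d - ws (mf γ)))) ≤ W γ N * T γ N := by
    intro γ hγ
    obtain ⟨hγP, hγnM⟩ := Finset.mem_sdiff.1 hγ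
    obtain ⟨hmM, hmle⟩ := hmf γ hγP
    obtain ⟨i0, hi0If, hi0lt⟩ := hstrict γ hγ
    have hwsle : ws γ ≤ d := by
      obtain ⟨b, hbA, hbeq⟩ := Finset.mem_image.1 hγP
      have h := hbb b hbA
      have h2 : ws γ = ∑ i ∈ If, b i := by
        rw [hwsdef]
        simp only
        rw [← hbeq]
        exact Finset.sum_congr rfl fun i hi => hpat_mem b i hi
      omega
    have hEsum : ws (mf γ) + ∑ i ∈ If, (γ i - mf γ i) = ws γ := by
      have h1 : ∀ i ∈ If, mf γ i + (γ i - mf γ i) = γ i := fun i _ => by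
        have := Finsupp.le_def.1 hmle i; omega
      rw [hwsdef]
      simp only
      rw [← Finset.sum_add_distrib]
      exact Finset.sum_congr rfl h1
    have hwslt : ws (mf γ) < ws γ := by
      rw [hwsdef]
      simp only
      exact Finset.sum_lt_sum (fun i _ => Finsupp.le_def.1 hmle i) ⟨i0, hi0If, hi0lt⟩
    -- per-N deterministic bound
    have hWTb : ∀ N, 1 ≤ tt N →
        W γ N * |T γ N| ≤ (C * ((μs (φ N) i0 : ℝ) / tt N)) *
          (W (mf γ) N * tt N ^ (d - ws (mf γ))) := by
      intro N htt1
      have htt0 : (0:ℝ) < tt N := by linarith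
      have hfac : ∀ i ∈ If, ((μs (φ N) i).descFactorial (γ i) : ℝ)
          ≤ ((μs (φ N) i).descFactorial (mf γ i) : ℝ) * (μs (φ N) i : ℝ) ^ (γ i - mf γ i) := by
        intro i _
        have hle_i : mf γ i ≤ γ i := Finsupp.le_def.1 hmle i
        have hnat : (μs (φ N) i).descFactorial (γ i)
            ≤ (μs (φ N) i).descFactorial (mf γ i) * (μs (φ N) i) ^ (γ i - mf γ i) := by
          rw [← Nat.descFactorial_mul_descFactorial hle_i]
          rw [Nat.mul_comm]
          exact Nat.mul_le_mul_left _ ((Nat.descFactorial_le_pow _ _).trans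
            (Nat.pow_le_pow_left (Nat.sub_le _ _) _))
        exact_mod_cast hnat
      have hW0 : W γ N ≤ W (mf γ) N * ∏ i ∈ If, (μs (φ N) i : ℝ) ^ (γ i - mf γ i) := by
        rw [hWdef]
        simp only
        rw [← Finset.prod_mul_distrib]
        exact Finset.prod_le_prod (fun i _ => Nat.cast_nonneg _) hfac
      have hPe : ∏ i ∈ If, (μs (φ N) i : ℝ) ^ (γ i - mf γ i)
          ≤ (μs (φ N) i0 : ℝ) * tt N ^ (ws γ - ws (mf γ) - 1) := by
        have hsplit0 : ∏ i ∈ If, (μs (φ N) i : ℝ) ^ (γ i - mf γ i)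
            = (μs (φ N) i0 : ℝ) ^ (γ i0 - mf γ i0)
              * ∏ i ∈ If.erase i0, (μs (φ N) i : ℝ) ^ (γ i - mf γ i) :=
          (Finset.mul_prod_erase If _ hi0If).symm
        have hrest : ∏ i ∈ If.erase i0, (μs (φ N) i : ℝ) ^ (γ i - mf γ i)
            ≤ ∏ i ∈ If.erase i0, tt N ^ (γ i - mf γ i) :=
          Finset.prod_le_prod (fun i _ => by positivity)
            (fun i _ => pow_le_pow_left₀ (Nat.cast_nonneg _) (hμle N i) _)
        have hrest2 : ∏ i ∈ If.erase i0, tt N ^ (γ i - mf γ i)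
            = tt N ^ (∑ i ∈ If.erase i0, (γ i - mf γ i)) :=
          Finset.prod_pow_eq_pow_sum _ _ _
        have hhead : (μs (φ N) i0 : ℝ) ^ (γ i0 - mf γ i0)
            ≤ (μs (φ N) i0 : ℝ) * tt N ^ (γ i0 - mf γ i0 - 1) := by
          have heq0 : (μs (φ N) i0 : ℝ) ^ (γ i0 - mf γ i0)
              = (μs (φ N) i0 : ℝ) * (μs (φ N) i0 : ℝ) ^ (γ i0 - mf γ i0 - 1) := by
            rw [← pow_succ']
            congr 1
            omega
          rw [heq0]
          refine mul_le_mul_of_nonneg_left ?_ (Nat.cast_nonneg _)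
          exact pow_le_pow_left₀ (Nat.cast_nonneg _) (hμle N i0) _
        have hsum_erase : (γ i0 - mf γ i0) + ∑ i ∈ If.erase i0, (γ i - mf γ i)
            = ∑ i ∈ If, (γ i - mf γ i) := Finset.add_sum_erase If (fun i => γ i - mf γ i) hi0If
        calc ∏ i ∈ If, (μs (φ N) i : ℝ) ^ (γ i - mf γ i)
            = (μs (φ N) i0 : ℝ) ^ (γ i0 - mf γ i0)
              * ∏ i ∈ If.erase i0, (μs (φ N) i : ℝ) ^ (γ i - mf γ i) := hsplit0
          _ ≤ ((μs (φ N) i0 : ℝ) * tt N ^ (γ i0 - mf γ i0 - 1))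
              * tt N ^ (∑ i ∈ If.erase i0, (γ i - mf γ i)) := by
              refine mul_le_mul hhead (hrest.trans_eq hrest2)
                (Finset.prod_nonneg fun i _ => by positivity) ?_
              exact mul_nonneg (Nat.cast_nonneg _) (pow_nonneg (by linarith) _)
          _ = (μs (φ N) i0 : ℝ) * tt N ^ (ws γ - ws (mf γ) - 1) := by
              rw [mul_assoc, ← pow_add]
              congr 2
              omega
      have hW1 : W γ N ≤ W (mf γ) N * ((μs (φ N) i0 : ℝ) * tt N ^ (ws γ - ws (mf γ) - 1)) :=
        hW0.trans (mul_le_mul_of_nonneg_left hPe (hWnonneg (mf γ) N))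
      have hT1 : |T γ N| ≤ C * tt N ^ (d - ws γ) := by
        rw [hTdef]
        simp only
        calc |∑ b ∈ f.support.filter (fun b => pat b = γ), f.coeff b * V b N|
            ≤ ∑ b ∈ f.support.filter (fun b => pat b = γ), |f.coeff b * V b N| :=
              Finset.abs_sum_le_sum_abs _ _
          _ ≤ ∑ b ∈ f.support.filter (fun b => pat b = γ), |f.coeff b| * tt N ^ (d - ws γ) := by
              refine Finset.sum_le_sum fun b hb => ?_
              rw [abs_mul, abs_of_nonneg (hVnonneg b N)]
              refine mul_le_mul_of_nonneg_left ?_ (abs_nonneg _)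
              obtain ⟨h1, h2, h3⟩ := hwsfiber γ b hb
              rw [hVdef]
              simp only
              calc ∏ j ∈ Ifᶜ, ((μs (φ N) j).descFactorial (b j) : ℝ)
                  ≤ ∏ j ∈ Ifᶜ, tt N ^ (b j) := by
                    refine Finset.prod_le_prod (fun j _ => Nat.cast_nonneg _) fun j _ => ?_
                    have hd : ((μs (φ N) j).descFactorial (b j) : ℝ)
                        ≤ (μs (φ N) j : ℝ) ^ (b j) := by
                      have hh := Nat.descFactorial_le_pow (μs (φ N) j) (b j)
                      exact_mod_cast hh
                    exact hd.trans (pow_le_pow_left₀ (Nat.cast_nonneg _) (hμle N j) _)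
                _ = tt N ^ (∑ j ∈ Ifᶜ, b j) := Finset.prod_pow_eq_pow_sum _ _ _
                _ = tt N ^ (d - ws γ) := by rw [h2]
          _ = (∑ b ∈ f.support.filter (fun b => pat b = γ), |f.coeff b|) * tt N ^ (d - ws γ) :=
              (Finset.sum_mul _ _ _).symm
          _ ≤ C * tt N ^ (d - ws γ) := by
              refine mul_le_mul_of_nonneg_right ?_ (by positivity)
              rw [hCdef]
              have hsub := Finset.sum_le_sum_of_subset_of_nonneg
                (Finset.filter_subset (fun b => pat b = γ) f.support)
                (fun b _ _ => abs_nonneg (f.coeff b))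
              linarith
      calc W γ N * |T γ N|
          ≤ (W (mf γ) N * ((μs (φ N) i0 : ℝ) * tt N ^ (ws γ - ws (mf γ) - 1)))
            * (C * tt N ^ (d - ws γ)) := by
            refine mul_le_mul hW1 hT1 (abs_nonneg _) ?_
            exact mul_nonneg (hWnonneg (mf γ) N)
              (mul_nonneg (Nat.cast_nonneg _) (pow_nonneg (by linarith) _))
        _ = (C * ((μs (φ N) i0 : ℝ) / tt N)) * (W (mf γ) N * tt N ^ (d - ws (mf γ))) := by
            have hexp1 : tt N ^ (d - ws (mf γ))
                = tt N * (tt N ^ (ws γ - ws (mf γ) - 1) * tt N ^ (d - ws γ)) := by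
              rw [← pow_add, ← pow_succ']
              congr 1
              omega
            rw [hexp1]
            field_simp
    have hcoef : Tendsto (fun N => C * ((μs (φ N) i0 : ℝ) / tt N)) atTop (𝓝 0) := by
      have hx0i : xst i0 = 0 := (hIfmem i0).1 hi0If
      have h7 := hcoord i0
      rw [hx0i] at h7
      have h8 := (tendsto_const_nhds (x := C)).mul h7
      rwa [mul_zero] at h8
    have hb : 0 < g0 (mf γ) / (2 * K) := by
      have := hg0pos _ hmM
      positivity
    have hcsmall : ∀ᶠ N in atTop, C * ((μs (φ N) i0 : ℝ) / tt N) ≤ g0 (mf γ) / (2 * K) :=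
      hcoef.eventually (eventually_le_nhds hb)
    filter_upwards [hcsmall, htT.eventually_ge_atTop 1] with N hN1 hN2
    have h3 := hWTb N hN2
    have h4 : W γ N * |T γ N| ≤ (g0 (mf γ) / (2 * K)) * (W (mf γ) N * tt N ^ (d - ws (mf γ))) := by
      refine h3.trans (mul_le_mul_of_nonneg_right hN1 ?_)
      have h5 := hWnonneg (mf γ) N
      have h6 := httnn N
      positivity
    have h5 : W γ N * (-|T γ N|) ≤ W γ N * T γ N :=
      mul_le_mul_of_nonneg_left (neg_abs_le _) (hWnonneg γ N)
    rw [mul_neg] at h5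
    linarith
  -- pick one big N and conclude
  have hAll : ∀ᶠ N in atTop, (∀ m ∈ M, (g0 m / 2) * tt N ^ (d - ws m) ≤ T m N)
      ∧ (∀ γ ∈ Pats \ M,
        -(g0 (mf γ) / (2 * K) * (W (mf γ) N * tt N ^ (d - ws (mf γ)))) ≤ W γ N * T γ N) :=
    ((Filter.eventually_all_finset M).2 EvT).and
      ((Filter.eventually_all_finset (Pats \ M)).2 EvB)
  obtain ⟨N, hN1, hN2⟩ := hAll.exists
  have hfinal : 0 ≤ Pfun f (μs (φ N)) := by
    rw [hsplit N, ← Finset.sum_sdiff hMsub]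
    have hlow1 : ∑ m ∈ M, W m N * ((g0 m / 2) * tt N ^ (d - ws m)) ≤ ∑ m ∈ M, W m N * T m N :=
      Finset.sum_le_sum fun m hm => mul_le_mul_of_nonneg_left (hN1 m hm) (hWnonneg m N)
    have hlow2 : ∑ γ ∈ Pats \ M,
        -(g0 (mf γ) / (2 * K) * (W (mf γ) N * tt N ^ (d - ws (mf γ))))
        ≤ ∑ γ ∈ Pats \ M, W γ N * T γ N := Finset.sum_le_sum hN2
    have hgroup : ∑ γ ∈ Pats \ M, g0 (mf γ) / (2 * K) * (W (mf γ) N * tt N ^ (d - ws (mf γ)))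
        ≤ ∑ m ∈ M, W m N * ((g0 m / 2) * tt N ^ (d - ws m)) := by
      rw [← Finset.sum_fiberwise_of_maps_to (t := M) (g := mf)
        (fun γ hγ => (hmf γ (Finset.mem_sdiff.1 hγ).1).1)
        (fun γ => g0 (mf γ) / (2 * K) * (W (mf γ) N * tt N ^ (d - ws (mf γ))))]
      refine Finset.sum_le_sum fun m hm => ?_
      have hconst : ∀ γ ∈ (Pats \ M).filter (fun γ => mf γ = m),
          g0 (mf γ) / (2 * K) * (W (mf γ) N * tt N ^ (d - ws (mf γ)))
            = g0 m / (2 * K) * (W m N * tt N ^ (d - ws m)) := fun γ hγ => by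
        rw [(Finset.mem_filter.1 hγ).2]
      rw [Finset.sum_congr rfl hconst, Finset.sum_const, nsmul_eq_mul]
      have hcard : ((((Pats \ M).filter (fun γ => mf γ = m)).card : ℕ) : ℝ) ≤ K := by
        rw [hKdef]
        have h1 : ((Pats \ M).filter (fun γ => mf γ = m)).card ≤ Pats.card :=
          Finset.card_le_card ((Finset.filter_subset _ _).trans Finset.sdiff_subset)
        have h2 : ((((Pats \ M).filter (fun γ => mf γ = m)).card : ℕ) : ℝ) ≤ (Pats.card : ℝ) := by
          exact_mod_cast h1
        linarith
      have hXnn : 0 ≤ W m N * tt N ^ (d - ws m) :=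
        mul_nonneg (hWnonneg m N) (pow_nonneg (httnn N) _)
      have hg0nn : 0 ≤ g0 m := le_of_lt (hg0pos m hm)
      calc ((((Pats \ M).filter (fun γ => mf γ = m)).card : ℕ) : ℝ)
            * (g0 m / (2 * K) * (W m N * tt N ^ (d - ws m)))
          ≤ K * (g0 m / (2 * K) * (W m N * tt N ^ (d - ws m))) := by
            refine mul_le_mul_of_nonneg_right hcard ?_
            exact mul_nonneg (div_nonneg hg0nn (by positivity)) hXnn
        _ = W m N * ((g0 m / 2) * tt N ^ (d - ws m)) := by
            field_simp
    have hneg : ∑ γ ∈ Pats \ M,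
        -(g0 (mf γ) / (2 * K) * (W (mf γ) N * tt N ^ (d - ws (mf γ))))
        = -(∑ γ ∈ Pats \ M, g0 (mf γ) / (2 * K) * (W (mf γ) N * tt N ^ (d - ws (mf γ)))) :=
      Finset.sum_neg_distrib _
    linarith
  exact absurd hfinal (not_le.2 (hP (φ N)))

end PolyaAux


open MvPolynomial in
/-- Pólya's Theorem with Zeros (Castle–Powers–Reznick). Let `f` be a nonzero
homogeneous copositive polynomial whose zero set inside the standard simplex `Δ` is a
union of faces `Δ_I`. Then `(x₁+⋯+x_n)^N·f` has no negative coefficients for some `N`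
iff for every `I` with `Δ_I` nonempty and `Δ_I` contained in the zero set of `f`:
(1) every `b` in the negative support dominates (on `I`) some `a` in the positive
support, and (2) for every `a` in the positive support minimal for `I`, the polynomial
`Σ_{b∈Γ_{I,a}} c_b x^b` is strictly positive on the open positive orthant. -/
theorem polya_with_zeros (n d : ℕ) (f : MvPolynomial (Fin n) ℝ) (hf0 : f ≠ 0)
    (hhom : f.IsHomogeneous d)
    (hcopos : ∀ u : Fin n → ℝ, (∀ i, 0 ≤ u i) → 0 ≤ eval u f)
    (hfaces : ∃ S : Set (Set (Fin n)),
      {x : Fin n → ℝ | (∀ i, 0 ≤ x i) ∧ (∑ i, x i = 1) ∧ eval x f = 0} =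
        ⋃ I ∈ S, {x : Fin n → ℝ | (∀ i, 0 ≤ x i) ∧ (∑ i, x i = 1) ∧ ∀ i ∈ I, x i = 0}) :
    (∃ N : ℕ, ∀ μ : Fin n →₀ ℕ, 0 ≤ ((∑ i, X i) ^ N * f).coeff μ) ↔
    (∀ I : Finset (Fin n),
      (∃ x : Fin n → ℝ, (∀ i, 0 ≤ x i) ∧ (∑ i, x i = 1) ∧ ∀ i ∈ I, x i = 0) →
      (∀ x : Fin n → ℝ, (∀ i, 0 ≤ x i) → (∑ i, x i = 1) → (∀ i ∈ I, x i = 0) →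
        eval x f = 0) →
      ((∀ b ∈ f.support, f.coeff b < 0 →
          ∃ a ∈ f.support, 0 < f.coeff a ∧ ∀ i ∈ I, a i ≤ b i) ∧
       (∀ a ∈ f.support, 0 < f.coeff a →
          (¬ ∃ a' ∈ f.support, 0 < f.coeff a' ∧ (∀ i ∈ I, a' i ≤ a i) ∧
              ∃ i ∈ I, a' i < a i) →
          ∀ x : Fin n → ℝ, (∀ i, 0 < x i) →
            0 < ∑ b ∈ f.support.filter (fun b => ∀ i ∈ I, b i = a i),
                  f.coeff b * ∏ i, x i ^ b i))) := by
  constructor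
  · rintro ⟨N, hN⟩ I hne _hvanish
    obtain ⟨x, hx0, hx1, hxI⟩ := hne
    have hjex : ∃ j, j ∉ I := by
      by_contra h
      push_neg at h
      have hz : ∑ i, x i = 0 := Finset.sum_eq_zero fun i _ => hxI i (h i)
      rw [hx1] at hz
      norm_num at hz
    obtain ⟨j, hj⟩ := hjex
    have hcond1 := PolyaAux.forward1 hN hj
    exact ⟨hcond1, fun a hasupp hapos hmin y hy =>
      PolyaAux.forward2 hN hj hcond1 hasupp hapos hmin y hy⟩
  · intro hRHS
    exact PolyaAux.backward hhom hcopos hfaces hRHS
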